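/- The Dirichlet inverse of κ_x equals J_x^{-1} * (2μ − ε), where J_x^{-1} is the Dirichlet inverse of Jordan's totient J_x. -/

import Mathlib

open Finset

/-- Recursive divisor function: κ_x(n) = n^x + Σ_{d|n, d<n} κ_x(d). -/
noncomputable def kappa (x : ℂ) (n : ℕ) : ℂ :=
  (n : ℂ) ^ x + ∑ d ∈ n.properDivisors.attach, kappa x d.1
termination_by n
decreasing_by exact (Nat.mem_properDivisors.mp d.2).2

/-- Number of ordered factorizations: K(n) = ε(n) + Σ_{d|n, d<n} K(d). -/
def Kfac (n : ℕ) : ℕ :=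
  (if n = 1 then 1 else 0) + ∑ d ∈ n.properDivisors.attach, Kfac d.1
termination_by n
decreasing_by exact (Nat.mem_properDivisors.mp d.2).2

/-- Divisor power sum σ_x(n) = Σ_{d|n} d^x. -/
noncomputable def sigmaC (x : ℂ) (n : ℕ) : ℂ := ∑ d ∈ n.divisors, (d : ℂ) ^ x

/-- Jordan's totient J_x = μ * id_x. -/
noncomputable def jordan (x : ℂ) (n : ℕ) : ℂ :=
  ∑ d ∈ n.divisors, (ArithmeticFunction.moebius d : ℂ) * ((n / d : ℕ) : ℂ) ^ x

open ArithmeticFunction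
open scoped ArithmeticFunction.Moebius ArithmeticFunction.zeta

lemma kappa_rec (x : ℂ) (n : ℕ) :
    kappa x n = (n : ℂ) ^ x + ∑ d ∈ n.properDivisors, kappa x d := by
  rw [kappa, Finset.sum_attach]

noncomputable def Kfun (x : ℂ) : ArithmeticFunction ℂ :=
  ⟨fun n => if n = 0 then 0 else kappa x n, by simp⟩

noncomputable def IdxF (x : ℂ) : ArithmeticFunction ℂ :=
  ⟨fun n => if n = 0 then 0 else (n : ℂ) ^ x, by simp⟩

noncomputable def Jfun (x : ℂ) : ArithmeticFunction ℂ :=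
  ⟨jordan x, by simp [jordan]⟩

lemma AF_sub_apply (f g : ArithmeticFunction ℂ) (n : ℕ) : (f - g) n = f n - g n := rfl

lemma sum_div_eq (f : ℕ → ℂ) (n : ℕ) (hn : n ≠ 0) :
    ∑ d ∈ n.divisors, f d = f n + ∑ d ∈ n.properDivisors, f d := by
  rw [← Nat.insert_self_properDivisors hn, Finset.sum_insert Nat.self_notMem_properDivisors]

lemma mul_apply' (f g : ArithmeticFunction ℂ) (n : ℕ) :
    (f * g) n = ∑ d ∈ n.divisors, f d * g (n / d) := by
  rw [ArithmeticFunction.mul_apply]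
  exact Nat.sum_divisorsAntidiagonal (fun a b => f a * g b)

lemma lemA (x : ℂ) : Kfun x * (2 - (ζ : ArithmeticFunction ℂ)) = IdxF x := by
  ext n
  rcases Nat.eq_zero_or_pos n with rfl | hn
  · simp
  have hKz : (Kfun x * (ζ : ArithmeticFunction ℂ)) n
      = ∑ d ∈ n.divisors, kappa x d := by
    rw [mul_apply']
    refine Finset.sum_congr rfl fun d hd => ?_
    have hd0 : 0 < d := Nat.pos_of_mem_divisors hd
    have hnd : 0 < n / d :=
      Nat.div_pos (Nat.le_of_dvd hn (Nat.mem_divisors.mp hd).1) hd0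
    simp [Kfun, natCoe_apply, hd0.ne', hnd.ne']
  have h2 : (Kfun x * (2 : ArithmeticFunction ℂ)) n = kappa x n + kappa x n := by
    rw [mul_two, ArithmeticFunction.add_apply]
    simp [Kfun, hn.ne']
  have : (Kfun x * (2 - (ζ : ArithmeticFunction ℂ))) n
      = (Kfun x * 2) n - (Kfun x * ζ) n := by
    rw [mul_sub, AF_sub_apply]
  rw [this, h2, hKz, sum_div_eq _ _ hn.ne']
  have := kappa_rec x n
  simp only [IdxF, ArithmeticFunction.coe_mk]
  rw [if_neg hn.ne']
  linear_combination this

lemma lemB (x : ℂ) : IdxF x * (μ : ArithmeticFunction ℂ) = Jfun x := by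
  rw [mul_comm]
  ext n
  rcases Nat.eq_zero_or_pos n with rfl | hn
  · simp [Jfun, jordan]
  rw [mul_apply']
  simp only [Jfun, ArithmeticFunction.coe_mk]
  simp only [jordan]
  refine Finset.sum_congr rfl fun d hd => ?_
  have hnd : 0 < n / d :=
    Nat.div_pos (Nat.le_of_dvd hn (Nat.mem_divisors.mp hd).1)
      (Nat.pos_of_mem_divisors hd)
  simp [IdxF, intCoe_apply, hnd.ne']

theorem stmt12 (x : ℂ) (g h : ℕ → ℂ)
    (hg : ∀ n : ℕ, 0 < n →
      ∑ d ∈ n.divisors, kappa x d * g (n / d) = (if n = 1 then 1 else 0))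
    (hh : ∀ n : ℕ, 0 < n →
      ∑ d ∈ n.divisors, jordan x d * h (n / d) = (if n = 1 then 1 else 0)) :
    ∀ n : ℕ, 0 < n →
      g n = ∑ d ∈ n.divisors, h d *
        (2 * (ArithmeticFunction.moebius (n / d) : ℂ) - (if n / d = 1 then 1 else 0)) := by
  set G : ArithmeticFunction ℂ := ⟨fun n => if n = 0 then 0 else g n, rfl⟩ with hGdef
  set H : ArithmeticFunction ℂ := ⟨fun n => if n = 0 then 0 else h n, rfl⟩ with hHdef
  set M : ArithmeticFunction ℂ := 2 * (μ : ArithmeticFunction ℂ) - 1 with hMdef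
  have hKG : Kfun x * G = 1 := by
    ext n
    rcases Nat.eq_zero_or_pos n with rfl | hn
    · simp
    rw [mul_apply', ArithmeticFunction.one_apply]
    rw [← hg n hn]
    refine Finset.sum_congr rfl fun d hd => ?_
    have hd0 : 0 < d := Nat.pos_of_mem_divisors hd
    have hnd : 0 < n / d :=
      Nat.div_pos (Nat.le_of_dvd hn (Nat.mem_divisors.mp hd).1) hd0
    simp [Kfun, hGdef, hd0.ne', hnd.ne']
  have hJH : Jfun x * H = 1 := by
    ext n
    rcases Nat.eq_zero_or_pos n with rfl | hn
    · simp
    rw [mul_apply', ArithmeticFunction.one_apply]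
    rw [← hh n hn]
    refine Finset.sum_congr rfl fun d hd => ?_
    have hnd : 0 < n / d :=
      Nat.div_pos (Nat.le_of_dvd hn (Nat.mem_divisors.mp hd).1)
        (Nat.pos_of_mem_divisors hd)
    simp [Jfun, hHdef, hnd.ne']
  have hKM : Kfun x * M = Jfun x := by
    have : M = (2 - (ζ : ArithmeticFunction ℂ)) * (μ : ArithmeticFunction ℂ) := by
      rw [sub_mul, coe_zeta_mul_coe_moebius, hMdef]
    rw [this, ← mul_assoc, lemA, lemB]
  have hG : G = H * M := by
    calc G = G * (Kfun x * M * H) := by rw [hKM, hJH, mul_one]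
    _ = (Kfun x * G) * (H * M) := by ring
    _ = H * M := by rw [hKG, one_mul]
  intro n hn
  have : g n = (H * M) n := by
    rw [← hG]; simp [hGdef, hn.ne']
  rw [this, mul_apply']
  refine Finset.sum_congr rfl fun d hd => ?_
  have hd0 : 0 < d := Nat.pos_of_mem_divisors hd
  have hM : M (n / d) = 2 * (ArithmeticFunction.moebius (n / d) : ℂ)
      - (if n / d = 1 then 1 else 0) := by
    rw [hMdef, AF_sub_apply, two_mul, ArithmeticFunction.add_apply,
      ArithmeticFunction.one_apply, intCoe_apply]
    ring
  rw [hM]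
  simp [hHdef, hd0.ne']
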